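/- Let 𝒲₆' = {w ∈ ⟨W₆⁺, i·Id⟩ : product of nonzero entries equals 1}, where W₆⁺ is the group of signed 6×6 permutation matrices of determinant 1. If G is a subgroup of G₃₁ = Λ⁻¹(𝒲₆') ⊂ GL(V) with Λ(G) = 𝒲₆', then G = G₃₁. -/

import Mathlib

noncomputable section
open Matrix Complex


/-- The signed permutation matrix with underlying permutation `σ` and signs `a`. -/
def sp (σ : Equiv.Perm (Fin 6)) (a : Fin 6 → ℂ) : Matrix (Fin 6) (Fin 6) ℂ :=
  Matrix.of fun i j => if i = σ j then a j else 0

/-- All entries are `±1`. -/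
def signs (a : Fin 6 → ℂ) : Prop := ∀ k, a k = 1 ∨ a k = -1

/-- The Weyl group of type `B₆`: all signed permutation matrices. -/
def W6Set : Set (GL (Fin 6) ℂ) :=
  {g | ∃ σ a, signs a ∧ (g : Matrix (Fin 6) (Fin 6) ℂ) = sp σ a}

/-- `W₆⁺`: signed permutation matrices of determinant 1. -/
def W6plusSet : Set (GL (Fin 6) ℂ) :=
  {g | ∃ σ a, signs a ∧ (g : Matrix (Fin 6) (Fin 6) ℂ) = sp σ a ∧
    (g : Matrix (Fin 6) (Fin 6) ℂ).det = 1}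

/-- `W₆'` (type `D₆`): signed permutation matrices with product of entries 1. -/
def W6'Set : Set (GL (Fin 6) ℂ) :=
  {g | ∃ σ a, signs a ∧ (∏ k, a k) = 1 ∧ (g : Matrix (Fin 6) (Fin 6) ℂ) = sp σ a}

/-- `A₆'`: diagonal sign matrices with product of entries 1. -/
def A6'Set : Set (GL (Fin 6) ℂ) :=
  {g | ∃ a, signs a ∧ (∏ k, a k) = 1 ∧ (g : Matrix (Fin 6) (Fin 6) ℂ) = Matrix.diagonal a}

/-- `i · Id` as an element of `GL₆(ℂ)`. -/
def iId : GL (Fin 6) ℂ :=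
  ⟨Matrix.diagonal (fun _ => Complex.I), Matrix.diagonal (fun _ => -Complex.I),
    by simp [Matrix.diagonal_mul_diagonal, Complex.I_mul_I],
    by simp [Matrix.diagonal_mul_diagonal, Complex.I_mul_I]⟩

/-- For a monomial matrix, the product of its nonzero entries (γ). -/
def gam (m : Matrix (Fin 6) (Fin 6) ℂ) : ℂ := ∏ j, ∑ i, m i j

/-- `𝒲₆ = ⟨W₆⁺, i·Id⟩`. -/
def CW6Sub : Subgroup (GL (Fin 6) ℂ) := Subgroup.closure (W6plusSet ∪ {iId})

/-- `𝒲₆' = 𝒲₆ ∩ ker γ`. -/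
def CW6'Set : Set (GL (Fin 6) ℂ) :=
  {g | g ∈ CW6Sub ∧ gam (g : Matrix (Fin 6) (Fin 6) ℂ) = 1}

def CW6'Sub : Subgroup (GL (Fin 6) ℂ) := Subgroup.closure CW6'Set

def W6Sub : Subgroup (GL (Fin 6) ℂ) := Subgroup.closure W6Set
def W6plusSub : Subgroup (GL (Fin 6) ℂ) := Subgroup.closure W6plusSet
def W6'Sub : Subgroup (GL (Fin 6) ℂ) := Subgroup.closure W6'Set

/-- The six index pairs `(i,j)`, `i<j`, of `Fin 4`, indexing the basis `eᵢ ∧ eⱼ` of `⋀²ℂ⁴`. -/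
def pairs : Fin 6 → Fin 4 × Fin 4 := ![(0,1),(0,2),(0,3),(1,2),(1,3),(2,3)]

/-- The second compound matrix: the matrix of `⋀²g` in the basis `eᵢ ∧ eⱼ`. -/
def lam2 (g : Matrix (Fin 4) (Fin 4) ℂ) : Matrix (Fin 6) (Fin 6) ℂ :=
  Matrix.of fun p q =>
    g (pairs p).1 (pairs q).1 * g (pairs p).2 (pairs q).2 -
      g (pairs p).1 (pairs q).2 * g (pairs p).2 (pairs q).1

def rt : ℂ := ((Real.sqrt 2 : ℝ) : ℂ)⁻¹

/-- Change of basis from an orthonormal basis of `⋀²ℂ⁴` (for the wedge form `b_∧`)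
to the basis `eᵢ ∧ eⱼ`. -/
def Pmat : Matrix (Fin 6) (Fin 6) ℂ :=
  !![rt, -I*rt, 0, 0, 0, 0;
     0, 0, -I*rt, rt, 0, 0;
     0, 0, 0, 0, rt, -I*rt;
     0, 0, 0, 0, rt, I*rt;
     0, 0, -I*rt, -rt, 0, 0;
     rt, I*rt, 0, 0, 0, 0]

/-- The exterior square map `Λ`, expressed in the fixed orthonormal basis of `⋀²ℂ⁴`. -/
def LamM (g : Matrix (Fin 4) (Fin 4) ℂ) : Matrix (Fin 6) (Fin 6) ℂ :=
  Pmat⁻¹ * lam2 g * Pmat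

/-- `G₃₁ = Λ⁻¹(𝒲₆')`. -/
def G31Set : Set (GL (Fin 4) ℂ) :=
  {g | ∃ h : GL (Fin 6) ℂ, h ∈ CW6'Set ∧
    (h : Matrix (Fin 6) (Fin 6) ℂ) = LamM (g : Matrix (Fin 4) (Fin 4) ℂ)}

def G31Sub : Subgroup (GL (Fin 4) ℂ) := Subgroup.closure G31Set

/-- `i · Id` in `GL₄(ℂ)`. -/
def iId4 : GL (Fin 4) ℂ :=
  ⟨Matrix.diagonal (fun _ => Complex.I), Matrix.diagonal (fun _ => -Complex.I),
    by simp [Matrix.diagonal_mul_diagonal, Complex.I_mul_I],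
    by simp [Matrix.diagonal_mul_diagonal, Complex.I_mul_I]⟩

/-- A (complex) reflection: a nonidentity element fixing a hyperplane pointwise. -/
def IsReflection (g : GL (Fin 4) ℂ) : Prop :=
  g ≠ 1 ∧
    Module.finrank ℂ
      (LinearMap.ker (Matrix.toLin' ((g : Matrix (Fin 4) (Fin 4) ℂ) - 1))) = 3

/-- The element `μ₀` of `W₆⁺` made of three rotation blocks. -/
def mu0 : Matrix (Fin 6) (Fin 6) ℂ :=
  !![0, 1, 0, 0, 0, 0;
     -1, 0, 0, 0, 0, 0;
     0, 0, 0, 1, 0, 0;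
     0, 0, -1, 0, 0, 0;
     0, 0, 0, 0, 0, 1;
     0, 0, 0, 0, -1, 0]

/-- `M̃`: the reflections of `G₃₁` lying over `i·μ`, `μ` in the `W₆⁺`-conjugacy class of `μ₀`. -/
def MtildeSet : Set (GL (Fin 4) ℂ) :=
  {g | IsReflection g ∧ ∃ w : GL (Fin 6) ℂ, w ∈ W6plusSet ∧
    LamM (g : Matrix (Fin 4) (Fin 4) ℂ) =
      Complex.I • ((w : Matrix (Fin 6) (Fin 6) ℂ) * mu0 * ((w⁻¹ : GL (Fin 6) ℂ) : Matrix (Fin 6) (Fin 6) ℂ))}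

/-- `O₂(G₃₁) = Λ⁻¹(A₆')` as a set. -/
def O2Set : Set (GL (Fin 4) ℂ) :=
  {g | ∃ h : GL (Fin 6) ℂ, h ∈ A6'Set ∧
    (h : Matrix (Fin 6) (Fin 6) ℂ) = LamM (g : Matrix (Fin 4) (Fin 4) ℂ)}

def O2Sub : Subgroup (GL (Fin 4) ℂ) := Subgroup.closure O2Set

/-- `H` is a normal 2-subgroup of `G`. -/
def IsNormal2SubgroupOf (H G : Subgroup (GL (Fin 4) ℂ)) : Prop :=
  H ≤ G ∧ (∀ g ∈ G, ∀ h ∈ H, g * h * g⁻¹ ∈ H) ∧ ∃ k : ℕ, Nat.card H = 2 ^ k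


/-! ### Auxiliary lemmas -/

theorem pairs_0 : pairs 0 = (0,1) := rfl
theorem pairs_1 : pairs 1 = (0,2) := rfl
theorem pairs_2 : pairs 2 = (0,3) := rfl
theorem pairs_3 : pairs 3 = (1,2) := rfl
theorem pairs_4 : pairs 4 = (1,3) := rfl
theorem pairs_5 : pairs 5 = (2,3) := rfl

theorem rt_mul_rt : rt * rt = 2⁻¹ := by
  have h2 : ((Real.sqrt 2 : ℝ) : ℂ) * ((Real.sqrt 2 : ℝ) : ℂ) = 2 := by
    rw [← Complex.ofReal_mul]
    norm_num [← Real.sqrt_mul_self (by norm_num : (0:ℝ) ≤ 2)]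
  rw [rt, ← mul_inv, h2]

theorem rt_sq : rt ^ 2 = 2⁻¹ := by rw [pow_two]; exact rt_mul_rt

theorem vec6_0 {α : Type*} (a b c d e f : α) : ![a,b,c,d,e,f] 0 = a := rfl
theorem vec6_1 {α : Type*} (a b c d e f : α) : ![a,b,c,d,e,f] 1 = b := rfl
theorem vec6_2 {α : Type*} (a b c d e f : α) : ![a,b,c,d,e,f] 2 = c := rfl
theorem vec6_3 {α : Type*} (a b c d e f : α) : ![a,b,c,d,e,f] 3 = d := rfl
theorem vec6_4 {α : Type*} (a b c d e f : α) : ![a,b,c,d,e,f] 4 = e := rfl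
theorem vec6_5 {α : Type*} (a b c d e f : α) : ![a,b,c,d,e,f] 5 = f := rfl

/-- Explicit inverse of `Pmat`. -/
def Qmat : Matrix (Fin 6) (Fin 6) ℂ :=
  !![rt, 0, 0, 0, 0, rt;
     I*rt, 0, 0, 0, 0, -I*rt;
     0, I*rt, 0, 0, I*rt, 0;
     0, rt, 0, 0, -rt, 0;
     0, 0, rt, rt, 0, 0;
     0, 0, I*rt, -I*rt, 0, 0]

set_option maxHeartbeats 2000000 in
theorem hPQ : Pmat * Qmat = 1 := by
  ext i j
  fin_cases i <;> fin_cases j <;>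
    simp only [Pmat, Qmat, Matrix.mul_apply, Fin.sum_univ_six, Matrix.one_apply,
      Matrix.of_apply, vec6_0, vec6_1, vec6_2, vec6_3, vec6_4, vec6_5,
      Fin.reduceFinMk, Fin.reduceEq, reduceIte]
  all_goals try ring_nf
  all_goals try simp only [Complex.I_sq, rt_sq]
  all_goals norm_num

set_option maxHeartbeats 2000000 in
theorem hQP : Qmat * Pmat = 1 := by
  ext i j
  fin_cases i <;> fin_cases j <;>
    simp only [Pmat, Qmat, Matrix.mul_apply, Fin.sum_univ_six, Matrix.one_apply,
      Matrix.of_apply, vec6_0, vec6_1, vec6_2, vec6_3, vec6_4, vec6_5,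
      Fin.reduceFinMk, Fin.reduceEq, reduceIte]
  all_goals try ring_nf
  all_goals try simp only [Complex.I_sq, rt_sq]
  all_goals norm_num

theorem Pmat_inv : Pmat⁻¹ = Qmat := Matrix.inv_eq_right_inv hPQ

set_option maxHeartbeats 2000000 in
theorem lam2_mul (A B : Matrix (Fin 4) (Fin 4) ℂ) : lam2 (A * B) = lam2 A * lam2 B := by
  ext p q
  fin_cases p <;> fin_cases q <;>
    simp only [lam2, pairs_0, pairs_1, pairs_2, pairs_3, pairs_4, pairs_5, Matrix.mul_apply,
      Fin.sum_univ_six, Fin.sum_univ_four, Matrix.of_apply] <;> ring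

theorem lam2_one : lam2 (1 : Matrix (Fin 4) (Fin 4) ℂ) = 1 := by
  ext p q
  fin_cases p <;> fin_cases q <;>
    simp [lam2, pairs_0, pairs_1, pairs_2, pairs_3, pairs_4, pairs_5, Matrix.one_apply]

set_option maxHeartbeats 2000000 in
theorem lam2_eq_one (m : Matrix (Fin 4) (Fin 4) ℂ) (h : lam2 m = 1) :
    m = 1 ∨ m = -1 := by
  have H : ∀ p q : Fin 6, m (pairs p).1 (pairs q).1 * m (pairs p).2 (pairs q).2 -
      m (pairs p).1 (pairs q).2 * m (pairs p).2 (pairs q).1 = if p = q then (1:ℂ) else 0 := by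
    intro p q
    have h' := Matrix.ext_iff.mpr h p q
    simpa [lam2, Matrix.one_apply] using h'
  have h00 := H 0 0; have h01 := H 0 1; have h02 := H 0 2; have h03 := H 0 3
  have h04 := H 0 4; have h10 := H 1 0; have h11 := H 1 1; have h12 := H 1 2
  have h13 := H 1 3; have h20 := H 2 0; have h21 := H 2 1; have h22 := H 2 2
  have h24 := H 2 4; have h30 := H 3 0; have h31 := H 3 1; have h33 := H 3 3
  have h40 := H 4 0; have h42 := H 4 2; have h44 := H 4 4; have h51 := H 5 1
  have h52 := H 5 2; have h55 := H 5 5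
  simp only [pairs_0, pairs_1, pairs_2, pairs_3, pairs_4, pairs_5, Fin.reduceEq, reduceIte,
    if_true, if_false] at h00 h01 h02 h03 h04 h10 h11 h12 h13 h20 h21 h22 h24 h30 h31 h33 h40 h42 h44 h51 h52 h55
  have z01 : m 0 1 = 0 := by linear_combination (m 1 1) * h13 + (-(m 2 1)) * h03 + (-(m 0 1)) * h33
  have z02 : m 0 2 = 0 := by linear_combination (-(m 2 2)) * h03 + (m 1 2) * h13 + (-(m 0 2)) * h33
  have z03 : m 0 3 = 0 := by linear_combination (-(m 3 3)) * h04 + (m 1 3) * h24 + (-(m 0 3)) * h44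
  have z10 : m 1 0 = 0 := by linear_combination (m 0 0) * h31 + (m 2 0) * h01 + (-(m 1 0)) * h11
  have z12 : m 1 2 = 0 := by linear_combination (m 2 2) * h01 + (m 0 2) * h31 + (-(m 1 2)) * h11
  have z13 : m 1 3 = 0 := by linear_combination (m 3 3) * h02 + (m 0 3) * h42 + (-(m 1 3)) * h22
  have z20 : m 2 0 = 0 := by linear_combination (-(m 0 0)) * h30 + (m 1 0) * h10 + (-(m 2 0)) * h00
  have z21 : m 2 1 = 0 := by linear_combination (m 1 1) * h10 + (-(m 0 1)) * h30 + (-(m 2 1)) * h00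
  have z23 : m 2 3 = 0 := by linear_combination (m 3 3) * h12 + (m 0 3) * h52 + (-(m 2 3)) * h22
  have z30 : m 3 0 = 0 := by linear_combination (-(m 0 0)) * h40 + (m 1 0) * h20 + (-(m 3 0)) * h00
  have z31 : m 3 1 = 0 := by linear_combination (m 1 1) * h20 + (-(m 0 1)) * h40 + (-(m 3 1)) * h00
  have z32 : m 3 2 = 0 := by linear_combination (m 2 2) * h21 + (-(m 0 2)) * h51 + (-(m 3 2)) * h11
  have d0 : m 0 0 * m 1 1 = 1 := by linear_combination h00 + (m 1 0) * z01
  have d1 : m 0 0 * m 2 2 = 1 := by linear_combination h11 + (m 2 0) * z02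
  have d2 : m 0 0 * m 3 3 = 1 := by linear_combination h22 + (m 3 0) * z03
  have d3 : m 1 1 * m 2 2 = 1 := by linear_combination h33 + (m 2 1) * z12
  have ha : m 0 0 ≠ 0 := by
    intro hz; rw [hz, zero_mul] at d0; exact one_ne_zero d0.symm
  have e1 : m 1 1 = m 2 2 := mul_left_cancel₀ ha (d0.trans d1.symm)
  have e2 : m 1 1 = m 3 3 := mul_left_cancel₀ ha (d0.trans d2.symm)
  have hsq : m 1 1 * m 1 1 = 1 := by rw [← e1] at d3; exact d3
  have hm11 : m 1 1 ≠ 0 := by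
    intro hz; rw [hz, zero_mul] at hsq; exact one_ne_zero hsq.symm
  have e0 : m 0 0 = m 1 1 := mul_right_cancel₀ hm11 (d0.trans hsq.symm)
  rcases mul_self_eq_one_iff.mp hsq with h1 | h1
  · left
    have v00 : m 0 0 = 1 := e0.trans h1
    have v22 : m 2 2 = 1 := e1.symm.trans h1
    have v33 : m 3 3 = 1 := e2.symm.trans h1
    ext i j
    fin_cases i <;> fin_cases j <;>
      simp [Matrix.one_apply, v00, h1, v22, v33, z01, z02, z03, z10, z12, z13,
        z20, z21, z23, z30, z31, z32]
  · right
    have v00 : m 0 0 = -1 := e0.trans h1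
    have v22 : m 2 2 = -1 := e1.symm.trans h1
    have v33 : m 3 3 = -1 := e2.symm.trans h1
    ext i j
    fin_cases i <;> fin_cases j <;>
      simp [Matrix.one_apply, v00, h1, v22, v33, z01, z02, z03, z10, z12, z13,
        z20, z21, z23, z30, z31, z32]

theorem lam2_of_LamM (A : Matrix (Fin 4) (Fin 4) ℂ) : lam2 A = Pmat * LamM A * Qmat := by
  rw [LamM, Pmat_inv]
  rw [show Pmat * (Qmat * lam2 A * Pmat) * Qmat = (Pmat * Qmat) * lam2 A * (Pmat * Qmat) by
    noncomm_ring, hPQ, one_mul, mul_one]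

theorem LamM_inj {A B : Matrix (Fin 4) (Fin 4) ℂ} (h : LamM A = LamM B) : lam2 A = lam2 B := by
  rw [lam2_of_LamM, lam2_of_LamM, h]

theorem lam2_diagI : lam2 (Matrix.diagonal (fun _ => I) : Matrix (Fin 4) (Fin 4) ℂ) = -1 := by
  ext p q
  fin_cases p <;> fin_cases q <;>
    simp [lam2, pairs_0, pairs_1, pairs_2, pairs_3, pairs_4, pairs_5,
      Matrix.diagonal_apply, Matrix.neg_apply, Matrix.one_apply, Complex.I_mul_I]

theorem LamM_iId4 : LamM ((iId4 : GL (Fin 4) ℂ) : Matrix (Fin 4) (Fin 4) ℂ) = -1 := by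
  have hv : ((iId4 : GL (Fin 4) ℂ) : Matrix (Fin 4) (Fin 4) ℂ)
      = Matrix.diagonal (fun _ => I) := rfl
  rw [hv, LamM, lam2_diagI, Pmat_inv]
  simp only [mul_neg, neg_mul, mul_one]
  rw [hQP]

theorem iId4_sq : iId4 * iId4 = (-1 : GL (Fin 4) ℂ) := by
  apply Units.ext
  show ((iId4 : GL (Fin 4) ℂ) : Matrix (Fin 4) (Fin 4) ℂ) *
    ((iId4 : GL (Fin 4) ℂ) : Matrix (Fin 4) (Fin 4) ℂ) = _
  have hv : ((iId4 : GL (Fin 4) ℂ) : Matrix (Fin 4) (Fin 4) ℂ)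
      = Matrix.diagonal (fun _ => I) := rfl
  rw [hv, Matrix.diagonal_mul_diagonal]
  ext i j
  by_cases hij : i = j <;> simp [Matrix.diagonal_apply, hij, Complex.I_mul_I]

/-- The key injectivity-up-to-sign of `Λ`. -/
theorem key (A B : GL (Fin 4) ℂ)
    (h : LamM (A : Matrix (Fin 4) (Fin 4) ℂ) = LamM (B : Matrix (Fin 4) (Fin 4) ℂ)) :
    A = B ∨ A = -B := by
  have hBB : (B : Matrix (Fin 4) (Fin 4) ℂ) * ((B⁻¹ : GL (Fin 4) ℂ) : Matrix (Fin 4) (Fin 4) ℂ)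
      = 1 := by
    rw [← Units.val_mul, mul_inv_cancel, Units.val_one]
  have h1 : lam2 (((A * B⁻¹ : GL (Fin 4) ℂ) : Matrix (Fin 4) (Fin 4) ℂ)) = 1 := by
    rw [Units.val_mul, lam2_mul, LamM_inj h, ← lam2_mul, hBB, lam2_one]
  rcases lam2_eq_one _ h1 with h2 | h2
  · left
    have : A * B⁻¹ = 1 := Units.ext (by rw [h2, Units.val_one])
    exact mul_inv_eq_one.mp this
  · right
    have hu : A * B⁻¹ = -1 := Units.ext (by rw [h2]; simp)
    calc A = A * B⁻¹ * B := by rw [inv_mul_cancel_right]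
    _ = -1 * B := by rw [hu]
    _ = -B := by rw [neg_one_mul]

theorem neg_one_mem_CW6' : (-1 : GL (Fin 6) ℂ) ∈ CW6'Set := by
  constructor
  · apply Subgroup.subset_closure
    left
    refine ⟨1, fun _ => -1, fun k => Or.inr rfl, ?_, ?_⟩
    · ext i j
      simp [sp, Matrix.one_apply, apply_ite]
      by_cases hij : i = j <;> simp [hij]
    · simp only [Units.val_neg, Units.val_one, Matrix.det_neg, Matrix.det_one]
      norm_num
  · have hv : ((-1 : GL (Fin 6) ℂ) : Matrix (Fin 6) (Fin 6) ℂ) = -(1 : Matrix (Fin 6) (Fin 6) ℂ) := by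
      simp
    rw [gam, hv]
    simp only [Matrix.neg_apply, Matrix.one_apply, Finset.sum_neg_distrib,
      Finset.sum_ite_eq, Finset.mem_univ, if_true, Finset.prod_const, Finset.card_univ,
      Fintype.card_fin]
    norm_num
/-- If `G` is a subgroup of `G₃₁ = Λ⁻¹(𝒲₆')` with `Λ(G) = 𝒲₆'`, then `G = G₃₁`. -/
theorem stmt_7 (G : Subgroup (GL (Fin 4) ℂ)) (hle : (G : Set (GL (Fin 4) ℂ)) ⊆ G31Set)
    (him : ∀ h : GL (Fin 6) ℂ, h ∈ CW6'Set ↔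
      ∃ g ∈ G, (h : Matrix (Fin 6) (Fin 6) ℂ) = LamM (g : Matrix (Fin 4) (Fin 4) ℂ)) :
    (G : Set (GL (Fin 4) ℂ)) = G31Set := by
  apply Set.Subset.antisymm hle
  have hneg1 : (-1 : GL (Fin 4) ℂ) ∈ G := by
    obtain ⟨g0, hg0G, hg0⟩ := (him (-1)).mp neg_one_mem_CW6'
    have hLam : LamM ((g0 : GL (Fin 4) ℂ) : Matrix (Fin 4) (Fin 4) ℂ)
        = LamM ((iId4 : GL (Fin 4) ℂ) : Matrix (Fin 4) (Fin 4) ℂ) := by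
      rw [← hg0, LamM_iId4]; simp
    have hsq : g0 * g0 = (-1 : GL (Fin 4) ℂ) := by
      rcases key g0 iId4 hLam with h' | h'
      · rw [h']; exact iId4_sq
      · rw [h', neg_mul_neg]; exact iId4_sq
    rw [← hsq]; exact mul_mem hg0G hg0G
  intro x hx
  obtain ⟨h6, hh6, hmat⟩ := hx
  obtain ⟨g, hgG, hgeq⟩ := (him h6).mp hh6
  rcases key x g (by rw [← hmat, hgeq]) with h' | h'
  · rw [h']; exact hgG
  · rw [h', neg_eq_neg_one_mul]
    exact mul_mem hneg1 hgG
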